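/- Let (i_n) ∈ {-1,0,1}^ℕ satisfy 01^∞ ≺ (i_n) ≺ 1^∞ in lexicographic order (equivalently i_1 = 1 and (i_n) ≠ 1^∞). Then the function λ ↦ (1-λ)·∑_{n≥1} i_n·λ^{n-1} is strictly decreasing on (0, 1/3]. -/

import Mathlib

open scoped Pointwise

/-- `PiFun i λ = (1-λ) ∑_{n≥0} i_n λ^n`, the series Π from the paper (0-based indexing). -/
noncomputable def PiFun (i : ℕ → ℝ) (l : ℝ) : ℝ := (1 - l) * ∑' n : ℕ, i n * l ^ n

/-- `i` is a sequence over the alphabet `{-1,0,1}`. -/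
def IsCoding (i : ℕ → ℝ) : Prop := ∀ n, i n = -1 ∨ i n = 0 ∨ i n = 1

/-- Strict lexicographic order on sequences. -/
def LexLt (i j : ℕ → ℝ) : Prop := ∃ m, (∀ n, n < m → i n = j n) ∧ i m < j m

/-- Non-strict lexicographic order on sequences. -/
def LexLe (i j : ℕ → ℝ) : Prop := LexLt i j ∨ i = j

-- `rho i j = 3^{-k}` where `k` is the first (0-based) index at which the sequences differ
-- (this equals `3^{1-k}` for 1-based indexing as in the paper).
open Classical in
noncomputable def rho (i j : ℕ → ℝ) : ℝ :=
  if i = j then 0 else (3 : ℝ) ^ (-((sInf {n : ℕ | i n ≠ j n} : ℕ) : ℤ))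

/-- The middle-`(1-2λ)` Cantor set `C_λ`. -/
def Cset (l : ℝ) : Set ℝ :=
  {x | ∃ i : ℕ → ℝ, (∀ n, i n = 0 ∨ i n = 1) ∧ x = (1 - l) * ∑' n : ℕ, i n * l ^ n}

/-- `Λ(t) = {λ ∈ (0,1/3] : t ∈ C_λ - C_λ}`. -/
def Lam (t : ℝ) : Set ℝ := {l | l ∈ Set.Ioc (0 : ℝ) (1/3) ∧ t ∈ Cset l - Cset l}

lemma aux_mono {n : ℕ} (hn : 1 ≤ n) {a b : ℝ} (ha : 0 < a) (hab : a < b) (hb : b ≤ 1/3) :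
    (1 - a) * a ^ n < (1 - b) * b ^ n := by
  obtain ⟨k, rfl⟩ : ∃ k, n = k + 1 := ⟨n - 1, by omega⟩
  have H : StrictMonoOn (fun x : ℝ => (1 - x) * x ^ (k + 1)) (Set.Icc 0 (1/3)) := by
    apply strictMonoOn_of_deriv_pos (convex_Icc _ _)
    · exact ((continuous_const.sub continuous_id).mul (continuous_pow _)).continuousOn
    · intro x hx
      rw [interior_Icc, Set.mem_Ioo] at hx
      have hd : HasDerivAt (fun x : ℝ => (1 - x) * x ^ (k + 1))
          ((-1) * x ^ (k + 1) + (1 - x) * ((k + 1) * x ^ k)) x := by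
        simpa using (((hasDerivAt_id x).const_sub 1).fun_mul (hasDerivAt_pow (k + 1) x))
      rw [hd.deriv]
      have hxk : (0:ℝ) < x ^ k := pow_pos hx.1 k
      have h1 : ((k:ℝ) + 2) * x < (k:ℝ) + 1 := by
        have : ((k:ℝ) + 2) * x < ((k:ℝ) + 2) * (1/3) := by
          apply mul_lt_mul_of_pos_left hx.2; positivity
        nlinarith
      have : (-1) * x ^ (k + 1) + (1 - x) * (((k:ℝ) + 1) * x ^ k)
          = x ^ k * (((k:ℝ) + 1) - ((k:ℝ) + 2) * x) := by
        rw [pow_succ]; ring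
      rw [this]
      nlinarith
  exact H ⟨ha.le, le_of_lt (hab.trans_le hb)⟩ ⟨(ha.trans hab).le, hb⟩ hab

lemma aux_le {n : ℕ} {a b : ℝ} (ha : 0 < a) (hab : a < b) (hb : b ≤ 1/3)
    {c : ℝ} (hc0 : 0 ≤ c) (hc : n = 0 → c = 0) :
    c * ((1 - a) * a ^ n) ≤ c * ((1 - b) * b ^ n) := by
  rcases Nat.eq_zero_or_pos n with rfl | hn
  · simp [hc rfl]
  · exact mul_le_mul_of_nonneg_left (aux_mono hn ha hab hb).le hc0

theorem stmt8 (i : ℕ → ℝ) (hi : IsCoding i)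
    (hlow : LexLt (fun n => if n = 0 then (0 : ℝ) else 1) i)
    (hhigh : LexLt i (fun _ => (1 : ℝ))) :
    StrictAntiOn (fun l => PiFun i l) (Set.Ioc (0 : ℝ) (1/3)) := by
  have hile : ∀ n, -1 ≤ i n ∧ i n ≤ 1 := by
    intro n; rcases hi n with h | h | h <;> rw [h] <;> norm_num
  have hi0 : i 0 = 1 := by
    obtain ⟨m, hpre, hm⟩ := hlow
    rcases Nat.eq_zero_or_pos m with rfl | hm0
    · norm_num at hm
      rcases hi 0 with h | h | h <;> linarith
    · exfalso
      have hm' : (1:ℝ) < i m := by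
        simpa [Nat.pos_iff_ne_zero.mp hm0] using hm
      exact absurd hm' (not_lt.mpr (hile m).2)
  obtain ⟨m, hpre, hm⟩ := hhigh
  simp only at hm hpre
  have hm0 : m ≠ 0 := by rintro rfl; rw [hi0] at hm; exact lt_irrefl _ hm
  have him : 1 ≤ 1 - i m := by
    rcases hi m with h | h | h <;> rw [h] <;> norm_num
    rw [h] at hm; exact absurd hm (lt_irrefl _)
  -- key reformulation
  have key : ∀ l ∈ Set.Ioc (0:ℝ) (1/3),
      PiFun i l = 1 - ∑' n, (1 - i n) * ((1 - l) * l ^ n) := by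
    intro l hl
    have hl0 := hl.1
    have hl1 : l < 1 := lt_of_le_of_lt hl.2 (by norm_num)
    have sgeo : Summable (fun n : ℕ => l ^ n) :=
      summable_geometric_of_lt_one hl0.le hl1
    have s1 : Summable (fun n : ℕ => i n * l ^ n) := by
      apply Summable.of_norm_bounded sgeo
      intro n
      rw [norm_mul, norm_pow, Real.norm_eq_abs, Real.norm_eq_abs, abs_of_pos hl0]
      have : |i n| ≤ 1 := abs_le.mpr (hile n)
      calc |i n| * l ^ n ≤ 1 * l ^ n := by
            exact mul_le_mul_of_nonneg_right this (pow_nonneg hl0.le n)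
        _ = l ^ n := one_mul _
    have s2 : Summable (fun n : ℕ => (1 - i n) * l ^ n) :=
      (sgeo.sub s1).congr fun n => by ring
    have ht2 : ∑' n : ℕ, (1 - i n) * l ^ n = (1 - l)⁻¹ - ∑' n : ℕ, i n * l ^ n := by
      have : (fun n : ℕ => (1 - i n) * l ^ n) = fun n => l ^ n - i n * l ^ n :=
        funext fun n => by ring
      rw [this, sgeo.tsum_sub s1, tsum_geometric_of_lt_one hl0.le hl1]
    have hne : (1 : ℝ) - l ≠ 0 := by linarith
    have : ∑' n : ℕ, (1 - i n) * ((1 - l) * l ^ n)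
        = (1 - l) * ∑' n : ℕ, (1 - i n) * l ^ n := by
      rw [← tsum_mul_left]
      exact tsum_congr fun n => by ring
    rw [this, ht2, PiFun]
    field_simp
    ring
  intro a ha b hb hab
  simp only
  rw [key a ha, key b hb]
  have hlt : ∑' n, (1 - i n) * ((1 - a) * a ^ n) < ∑' n, (1 - i n) * ((1 - b) * b ^ n) := by
    have sum_s : ∀ l ∈ Set.Ioc (0:ℝ) (1/3),
        Summable (fun n : ℕ => (1 - i n) * ((1 - l) * l ^ n)) := by
      intro l hl
      have hl0 := hl.1
      have hl1 : l < 1 := lt_of_le_of_lt hl.2 (by norm_num)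
      have sgeo : Summable (fun n : ℕ => l ^ n) :=
        summable_geometric_of_lt_one hl0.le hl1
      apply Summable.of_norm_bounded (sgeo.mul_left 2)
      intro n
      rw [norm_mul, norm_mul, norm_pow, Real.norm_eq_abs, Real.norm_eq_abs,
        Real.norm_eq_abs, abs_of_pos hl0]
      have h1 : |1 - i n| ≤ 2 := by
        have := hile n; rw [abs_le]; constructor <;> linarith [this.1, this.2]
      have h2 : |1 - l| ≤ 1 := by rw [abs_le]; constructor <;> linarith
      have hp : (0:ℝ) ≤ l ^ n := pow_nonneg hl0.le n
      calc |1 - i n| * (|1 - l| * l ^ n) ≤ 2 * (1 * l ^ n) := by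
            apply mul_le_mul h1 _ (by positivity) (by norm_num)
            exact mul_le_mul_of_nonneg_right h2 hp
        _ = 2 * l ^ n := by ring
    apply Summable.tsum_lt_tsum (i := m)
    · intro n
      refine aux_le ha.1 hab hb.2 (by linarith [(hile n).2]) ?_
      rintro rfl; rw [hi0]; ring
    · have := aux_mono (Nat.one_le_iff_ne_zero.mpr hm0) ha.1 hab hb.2
      exact mul_lt_mul_of_pos_left this (by linarith)
    · exact sum_s a ha
    · exact sum_s b hb
  linarith
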